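/- For an irreducible aperiodic finite Markov chain with transition matrix P and eigenvalues 1 = λ_1 > |λ_i| for i ≥ 2, Kemeny's constant κ = tr((I − P + P*)^{-1}) satisfies κ ≤ 1 + (n − 1)/(1 − λ*), where n is the number of states and λ* = max_{i≥2}|λ_i| is the second largest eigenvalue modulus. -/

import Mathlib

open Finset Polynomial Matrix
open scoped Matrix
set_option synthInstance.maxHeartbeats 1000000
set_option maxHeartbeats 2000000

section Main
variable {n : ℕ}

noncomputable abbrev KK := FractionRing (Polynomial ℂ)

noncomputable def φK : ℂ[X] →+* KK := algebraMap ℂ[X] KK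
noncomputable def gK : ℂ →+* KK := φK.comp C
noncomputable def tK : KK := φK X

lemma tK_sub_ne (c : ℂ) : tK - gK c ≠ 0 := by
  have : tK - gK c = φK (X - C c) := by simp [tK, gK, φK, map_sub]
  rw [this]
  exact fun h => Polynomial.X_sub_C_ne_zero c
    ((map_eq_zero_iff φK (IsFractionRing.injective ℂ[X] KK)).mp h)

lemma tK_ne_zero : tK ≠ 0 := by
  have := tK_sub_ne 0
  simpa using this

lemma aux_det_smul_one_sub_map {K : Type} [CommRing K] (g : ℂ →+* K) (s : K)
    (M : Matrix (Fin n) (Fin n) ℂ) :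
    (s • (1 : Matrix (Fin n) (Fin n) K) - M.map g).det = Polynomial.eval₂ g s M.charpoly := by
  rw [Matrix.charpoly, ← Polynomial.coe_eval₂RingHom, RingHom.map_det]
  congr 1
  ext i j
  by_cases h : i = j
  · subst h
    simp [Matrix.charmatrix_apply_eq, Matrix.map_apply]
  · simp [Matrix.charmatrix_apply_ne _ _ _ h, Matrix.map_apply, Matrix.one_apply_ne h,
      Matrix.sub_apply, Matrix.smul_apply, h]

lemma aux_eval₂_prod {K : Type} [CommRing K] (g : ℂ →+* K) (s : K)
    (u : Finset (Fin n)) (f : Fin n → ℂ) :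
    Polynomial.eval₂ g s (∏ i ∈ u, (X - C (f i))) = ∏ i ∈ u, (s - g (f i)) := by
  rw [← Polynomial.coe_eval₂RingHom, map_prod]
  simp

lemma aux_onebyone {ι : Type} [Unique ι] [DecidableEq ι] [Fintype ι] {K : Type} [CommRing K]
    (M : Matrix ι ι K) : (1 + M).det = 1 + M default default := by
  rw [Matrix.det_unique, Matrix.add_apply, Matrix.one_apply_eq]

lemma aux_charpoly_of_det (M : Matrix (Fin n) (Fin n) ℂ) (f : Fin n → ℂ)
    (h : (tK • (1 : Matrix (Fin n) (Fin n) KK) - M.map gK).det = ∏ i, (tK - gK (f i))) :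
    M.charpoly = ∏ i, (X - C (f i)) := by
  have hinj : Function.Injective φK := IsFractionRing.injective ℂ[X] KK
  apply hinj
  have key : ∀ p : ℂ[X], φK p = Polynomial.eval₂ gK tK p := by
    intro p
    conv_lhs => rw [← Polynomial.eval₂_C_X (p := p)]
    rw [Polynomial.hom_eval₂]
    rfl
  rw [key M.charpoly, key (∏ i, (X - C (f i))), aux_eval₂_prod,
    ← aux_det_smul_one_sub_map, h]

set_option maxHeartbeats 2000000 in
lemma stepA (hn : 0 < n) (P : Matrix (Fin n) (Fin n) ℝ)
    (hP_sum : ∀ i, ∑ j, P i j = 1) (d : Fin n → ℝ) (hd_sum : ∑ i, d i = 1)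
    (lam : Fin n → ℂ)
    (hchar : (P.map (algebraMap ℝ ℂ)).charpoly = ∏ i, (X - C (lam i)))
    (hlam1 : lam ⟨0, hn⟩ = 1) :
    ((1 - P + Matrix.of fun _ j => d j).map (algebraMap ℝ ℂ)).charpoly
      = ∏ i, (X - C (if i = ⟨0, hn⟩ then 1 else 1 - lam i)) := by
  set i0 : Fin n := ⟨0, hn⟩
  set toC : ℝ →+* ℂ := algebraMap ℝ ℂ with htoC
  set toK : ℝ →+* KK := gK.comp toC with htoK
  set ν : Fin n → ℂ := fun i => if i = i0 then 1 else 1 - lam i with hν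
  apply aux_charpoly_of_det
  have hmm : ((1 - P + Matrix.of fun _ j => d j).map toC).map gK
      = (1 - P + Matrix.of fun _ j => d j).map toK := by
    rw [Matrix.map_map]; rfl
  rw [hmm]
  set B : Matrix (Fin n) (Fin n) KK :=
    tK • 1 - ((1 : Matrix (Fin n) (Fin n) ℝ) - P).map toK with hB
  have hsplit : tK • (1 : Matrix (Fin n) (Fin n) KK)
        - (1 - P + Matrix.of fun _ j => d j).map toK
      = B + Matrix.replicateCol (Fin 1) (fun _ => (-1 : KK))
          * Matrix.replicateRow (Fin 1) (fun j => toK (d j)) := by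
    ext i j
    simp [hB, Matrix.mul_apply, Matrix.sub_apply, Matrix.add_apply, Matrix.smul_apply,
      Matrix.map_apply, Matrix.one_apply, map_sub, map_add, apply_ite]
    ring
  have hdetB : B.det = ∏ i, (tK - gK (1 - lam i)) := by
    have h1 : B = (-1 : KK) • ((1 - tK) • (1 : Matrix (Fin n) (Fin n) KK)
        - (P.map toC).map gK) := by
      ext i j
      simp [hB, Matrix.sub_apply, Matrix.smul_apply, Matrix.one_apply, Matrix.map_apply,
        map_sub, apply_ite, htoK]
      split_ifs with h <;> ring
    rw [h1, Matrix.det_smul, aux_det_smul_one_sub_map gK (1 - tK) (P.map toC), hchar,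
      aux_eval₂_prod]
    have h2 : ∀ i : Fin n, tK - gK (1 - lam i) = (-1) * ((1 - tK) - gK (lam i)) := by
      intro i; rw [map_sub, _root_.map_one]; ring
    rw [Finset.prod_congr rfl (fun i _ => h2 i), Finset.prod_mul_distrib,
      Finset.prod_const, Finset.card_univ, Fintype.card_fin]
  have hBne : B.det ≠ 0 := by
    rw [hdetB]; exact Finset.prod_ne_zero_iff.mpr (fun i _ => tK_sub_ne _)
  have hBunit : IsUnit B.det := isUnit_iff_ne_zero.mpr hBne
  have hrowsum : ∀ i, ∑ j, B i j = tK := by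
    intro i
    have hz : ∑ j, ((1 : Matrix (Fin n) (Fin n) ℝ) - P) i j = 0 := by
      simp [Matrix.sub_apply, Matrix.one_apply, Finset.sum_sub_distrib, hP_sum i]
    simp [hB, Matrix.sub_apply, Matrix.smul_apply, Matrix.one_apply, Matrix.map_apply,
      Finset.sum_sub_distrib, apply_ite, ← map_sum, hz]
    rw [hP_sum i]
    simp
  have hBinvsum : ∀ j, ∑ k, B⁻¹ j k = tK⁻¹ := by
    have hr : B *ᵥ (fun _ => (1:KK)) = fun _ => tK := by
      funext i
      have h0 : (B *ᵥ fun _ => (1:KK)) i = ∑ j, B i j := by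
        simp [Matrix.mulVec, dotProduct]
      rw [h0, hrowsum i]
    have h2 : B⁻¹ *ᵥ (fun _ => tK) = fun _ => (1:KK) := by
      rw [← hr, Matrix.mulVec_mulVec, Matrix.nonsing_inv_mul _ hBunit, Matrix.one_mulVec]
    intro j
    have h3 : (B⁻¹ *ᵥ (fun _ => tK)) j = tK * ∑ k, B⁻¹ j k := by
      simp [Matrix.mulVec, dotProduct, Finset.mul_sum, mul_comm]
    rw [h2] at h3
    exact (inv_eq_of_mul_eq_one_right h3.symm).symm
  rw [hsplit]
  erw [Matrix.det_add_replicateCol_mul_replicateRow (ι := Fin 1) hBunit]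
  have hentry : ∀ a b : Fin 1, ((Matrix.replicateRow (Fin 1) (fun j : Fin n => toK (d j)) * B⁻¹
      * Matrix.replicateCol (Fin 1) (fun _ : Fin n => (-1:KK))) : Matrix (Fin 1) (Fin 1) KK) a b = - tK⁻¹ := by
    intro a b
    simp only [Matrix.mul_apply, Matrix.replicateCol_apply, Matrix.replicateRow_apply]
    have h5 : ∑ k, (∑ j, toK (d j) * B⁻¹ j k) * (-1 : KK)
        = -(∑ j, toK (d j) * ∑ k, B⁻¹ j k) := by
      calc ∑ k, (∑ j, toK (d j) * B⁻¹ j k) * (-1:KK)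
          = -∑ k, ∑ j, toK (d j) * B⁻¹ j k := by simp
        _ = -∑ j, ∑ k, toK (d j) * B⁻¹ j k := by rw [Finset.sum_comm]
        _ = -(∑ j, toK (d j) * ∑ k, B⁻¹ j k) := by simp [Finset.mul_sum]
    rw [h5]
    have h6 : ∑ j, toK (d j) * ∑ k, B⁻¹ j k = tK⁻¹ := by
      simp only [hBinvsum]
      rw [← Finset.sum_mul, ← map_sum, hd_sum]
      simp
    rw [h6]
  rw [mul_comm]
  rw [show (fun a b => decidableEq_of_subsingleton a b : DecidableEq (Fin 1))
      = instDecidableEqFin 1 from Subsingleton.elim _ _]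
  rw [Matrix.det_unique, Matrix.add_apply, Matrix.one_apply_eq]
  erw [hentry]
  rw [hdetB]
  have hpl : ∏ i, (tK - gK (1 - lam i))
      = tK * ∏ i ∈ univ.erase i0, (tK - gK (1 - lam i)) := by
    rw [← Finset.mul_prod_erase univ _ (Finset.mem_univ i0)]
    congr 1
    rw [hlam1]; simp
  have hpr : ∏ i, (tK - gK (ν i))
      = (tK - 1) * ∏ i ∈ univ.erase i0, (tK - gK (1 - lam i)) := by
    rw [← Finset.mul_prod_erase univ _ (Finset.mem_univ i0)]
    congr 1
    · simp [hν]
    · apply Finset.prod_congr rfl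
      intro i hi
      have : i ≠ i0 := (Finset.mem_erase.mp hi).1
      simp [hν, this]
  rw [hpl, hpr]
  have htt : (1 + -tK⁻¹) * tK = tK - 1 := by
    rw [add_mul, neg_mul, inv_mul_cancel₀ tK_ne_zero]
    ring
  rw [← mul_assoc, mul_comm (1 + -tK⁻¹) tK, mul_comm tK (1 + -tK⁻¹), htt]

end Main

lemma stepB (M : Matrix (Fin n) (Fin n) ℂ) (f : Fin n → ℂ)
    (hM : M.charpoly = ∏ i, (X - C (f i))) (hf : ∀ i, f i ≠ 0) :
    M⁻¹.charpoly = ∏ i, (X - C (f i)⁻¹) := by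
  have hdet : M.det = ∏ i, f i := by
    have h0 := aux_det_smul_one_sub_map (RingHom.id ℂ) 0 M
    rw [hM, aux_eval₂_prod] at h0
    have h1 : ((0 : ℂ) • (1 : Matrix (Fin n) (Fin n) ℂ) - M.map (RingHom.id ℂ)) = -M := by
      ext i j; simp [Matrix.map_apply]
    rw [h1, Matrix.det_neg] at h0
    have h2 : ∏ i : Fin n, ((0:ℂ) - RingHom.id ℂ (f i)) = (-1) ^ Fintype.card (Fin n)
        * ∏ i, f i := by
      calc ∏ i : Fin n, ((0:ℂ) - RingHom.id ℂ (f i)) = ∏ i : Fin n, (-1 : ℂ) * f i := by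
            apply Finset.prod_congr rfl; intro i _; simp
        _ = (∏ _i : Fin n, (-1:ℂ)) * ∏ i, f i := Finset.prod_mul_distrib
        _ = (-1) ^ Fintype.card (Fin n) * ∏ i, f i := by
            rw [Finset.prod_const, Finset.card_univ]
    rw [h2] at h0
    exact mul_left_cancel₀ (pow_ne_zero _ (neg_ne_zero.mpr one_ne_zero)) h0
  have hdetne : M.det ≠ 0 := by
    rw [hdet]; exact Finset.prod_ne_zero_iff.mpr (fun i _ => hf i)
  have hMdetU : IsUnit M.det := isUnit_iff_ne_zero.mpr hdetne
  apply aux_charpoly_of_det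
  set MK : Matrix (Fin n) (Fin n) KK := M.map gK with hMK
  have hMKinv : M⁻¹.map gK = MK⁻¹ := by
    refine (Matrix.inv_eq_right_inv ?_).symm
    rw [← Matrix.map_mul, Matrix.mul_nonsing_inv _ hMdetU,
      Matrix.map_one _ (map_zero gK) (map_one gK)]
  rw [hMKinv]
  have hMKdet : MK.det = ∏ i, gK (f i) := by
    rw [hMK, ← RingHom.mapMatrix_apply, ← RingHom.map_det, hdet, map_prod]
  have hMKdetne : MK.det ≠ 0 := by
    rw [hMKdet]
    exact Finset.prod_ne_zero_iff.mpr
      (fun i _ => fun h => (hf i) ((map_eq_zero_iff gK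
        ((IsFractionRing.injective ℂ[X] KK).comp Polynomial.C_injective)).mp h))
  have hMKunit : IsUnit MK.det := isUnit_iff_ne_zero.mpr hMKdetne
  have key : MK.det * (tK • (1 : Matrix (Fin n) (Fin n) KK) - MK⁻¹).det
      = MK.det * ∏ i, (tK - gK ((f i)⁻¹)) := by
    rw [← Matrix.det_mul]
    have h3 : MK * (tK • (1 : Matrix (Fin n) (Fin n) KK) - MK⁻¹)
        = (-tK) • (tK⁻¹ • (1 : Matrix (Fin n) (Fin n) KK) - MK) := by
      rw [Matrix.mul_sub, mul_smul_comm, Matrix.mul_one, Matrix.mul_nonsing_inv _ hMKunit,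
        smul_sub, smul_smul, neg_mul, mul_inv_cancel₀ tK_ne_zero, neg_one_smul, neg_smul,
        sub_neg_eq_add]
      abel
    rw [h3, Matrix.det_smul, aux_det_smul_one_sub_map gK tK⁻¹ M, hM, aux_eval₂_prod]
    have h4 : ∀ i : Fin n, gK (f i) * (tK - gK ((f i)⁻¹))
        = (-tK) * (tK⁻¹ - gK (f i)) := by
      intro i
      have hne : gK (f i) ≠ 0 := fun h => (hf i) ((map_eq_zero_iff gK
        ((IsFractionRing.injective ℂ[X] KK).comp Polynomial.C_injective)).mp h)
      rw [map_inv₀, mul_sub, mul_inv_cancel₀ hne, neg_mul, sub_eq_add_neg (tK⁻¹),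
        mul_add, mul_inv_cancel₀ tK_ne_zero]
      ring
    rw [hMKdet, ← Finset.prod_mul_distrib, Finset.prod_congr rfl (fun i _ => h4 i),
      Finset.prod_mul_distrib, Finset.prod_const, Finset.card_univ]
  exact mul_left_cancel₀ hMKdetne key


/-- For an irreducible aperiodic finite Markov chain with eigenvalues
1 = λ_1 and |λ_i| < 1 for i ≥ 2, Kemeny's constant κ = tr((I − P + P*)⁻¹)
satisfies κ ≤ 1 + (n − 1)/(1 − λ*), where λ* is the second largest eigenvalue
modulus. -/
theorem kemeny_constant_slem_bound
    {n : ℕ} (hn : 0 < n)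
    (P : Matrix (Fin n) (Fin n) ℝ)
    (hP_nonneg : ∀ i j, 0 ≤ P i j) (hP_sum : ∀ i, ∑ j, P i j = 1)
    -- stationary distribution and limiting matrix P* = 1 d^T
    (d : Fin n → ℝ) (hd_pos : ∀ i, 0 < d i) (hd_sum : ∑ i, d i = 1)
    (hd_stat : ∀ j, ∑ i, d i * P i j = d j)
    (Pstar : Matrix (Fin n) (Fin n) ℝ) (hPstar : Pstar = Matrix.of fun _ j => d j)
    (hunit : IsUnit (1 - P + Pstar))
    -- eigenvalues λ of P (with multiplicity), λ_1 = 1 and |λ_i| < 1 for i ≥ 2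
    (lam : Fin n → ℂ)
    (hchar : (P.map (algebraMap ℝ ℂ)).charpoly = ∏ i, (X - C (lam i)))
    (hlam1 : lam ⟨0, hn⟩ = 1)
    (hlam_lt : ∀ i : Fin n, (i : ℕ) ≠ 0 → ‖lam i‖ < 1)
    -- λ* = max_{i≥2} |λ_i|
    (lamstar : ℝ) (hstar_lt : lamstar < 1) (hstar_nonneg : 0 ≤ lamstar)
    (hstar_ub : ∀ i : Fin n, (i : ℕ) ≠ 0 → ‖lam i‖ ≤ lamstar)
    (hstar_mem : n = 1 ∨ ∃ i : Fin n, (i : ℕ) ≠ 0 ∧ ‖lam i‖ = lamstar)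
    -- Kemeny's constant κ = tr(Z), Z = (I − P + P*)⁻¹
    (κ : ℝ) (hκ : κ = (1 - P + Pstar)⁻¹.trace) :
    κ ≤ 1 + ((n : ℝ) - 1) / (1 - lamstar) := by
  have hi0 : (⟨0, hn⟩ : Fin n) = ⟨0, hn⟩ := rfl
  set i0 : Fin n := ⟨0, hn⟩ with hi0def
  set ν : Fin n → ℂ := fun i => if i = i0 then 1 else 1 - lam i with hν
  have hν_ne : ∀ i, ν i ≠ 0 := by
    intro i
    by_cases h : i = i0
    · simp [hν, h]
    · simp only [hν, h, if_false]
      intro hz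
      have h1 : lam i = 1 := by
        have := sub_eq_zero.mp hz
        exact this.symm
      have hne : (i : ℕ) ≠ 0 := fun hh => h (Fin.ext hh)
      have := hlam_lt i hne
      rw [h1] at this
      simp at this
  set R : Matrix (Fin n) (Fin n) ℝ := 1 - P + Pstar with hR
  have hRdet : IsUnit R.det := (Matrix.isUnit_iff_isUnit_det R).mp hunit
  set fC : ℝ →+* ℂ := algebraMap ℝ ℂ with hfC
  set A : Matrix (Fin n) (Fin n) ℂ := R.map fC with hA
  have hcharA : A.charpoly = ∏ i, (X - C (ν i)) := by
    rw [hA, hR, hPstar]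
    exact stepA hn P hP_sum d hd_sum lam hchar hlam1
  have hAdet : IsUnit A.det := by
    rw [hA, ← RingHom.mapMatrix_apply, ← RingHom.map_det]
    exact hRdet.map fC
  have hcharInv : A⁻¹.charpoly = ∏ i, (X - C ((ν i)⁻¹)) := stepB A ν hcharA hν_ne
  have htr : A⁻¹.trace = ∑ i, (ν i)⁻¹ := by
    rw [Matrix.trace_eq_sum_roots_charpoly, hcharInv]
    have h2 : ∏ i : Fin n, (X - C ((ν i)⁻¹))
        = ((univ.val.map fun i => (ν i)⁻¹).map fun a => X - C a).prod := by
      rw [Multiset.map_map]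
      rfl
    rw [h2, Polynomial.roots_multiset_prod_X_sub_C]
    rfl
  have hmapinv : A⁻¹ = R⁻¹.map fC := by
    refine Matrix.inv_eq_right_inv ?_
    rw [hA, ← Matrix.map_mul, Matrix.mul_nonsing_inv _ hRdet,
      Matrix.map_one _ (map_zero fC) (map_one fC)]
  have hκC : (κ : ℂ) = ∑ i, (ν i)⁻¹ := by
    rw [← htr, hmapinv, hκ]
    simp [Matrix.trace, Matrix.diag, Matrix.map_apply, hfC, Complex.coe_algebraMap]
  have hκre : κ = ∑ i, ((ν i)⁻¹).re := by
    have h3 := congrArg Complex.re hκC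
    simpa using h3
  have hsplit : κ = 1 + ∑ i ∈ univ.erase i0, ((ν i)⁻¹).re := by
    rw [hκre, ← Finset.add_sum_erase _ _ (Finset.mem_univ i0)]
    congr 1
    simp [hν]
  have hd1 : (0:ℝ) < 1 - lamstar := by linarith
  have hbound : ∀ i ∈ univ.erase i0, ((ν i)⁻¹).re ≤ 1 / (1 - lamstar) := by
    intro i hi
    have hii0 : i ≠ i0 := (Finset.mem_erase.mp hi).1
    have hvne : (i : ℕ) ≠ 0 := fun hh => hii0 (Fin.ext hh)
    have habs : ‖lam i‖ ≤ lamstar := hstar_ub i hvne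
    have hre : (lam i).re ≤ lamstar := le_trans (Complex.re_le_norm _) habs
    have hν_i : ν i = 1 - lam i := by simp [hν, hii0]
    rw [hν_i, Complex.inv_re]
    have h1 : ((1 : ℂ) - lam i).re = 1 - (lam i).re := by simp
    have h2 : Complex.normSq (1 - lam i) = (1 - (lam i).re)^2 + (lam i).im^2 := by
      simp [Complex.normSq_apply]
      ring
    rw [h1, h2]
    have hd2 : (0:ℝ) < (1 - (lam i).re)^2 + (lam i).im^2 := by
      nlinarith [sq_nonneg ((lam i).im)]
    rw [div_le_div_iff₀ hd2 hd1]
    nlinarith [sq_nonneg ((lam i).im)]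
  have hcard : ((univ.erase i0).card : ℝ) = (n : ℝ) - 1 := by
    rw [Finset.card_erase_of_mem (Finset.mem_univ i0), Finset.card_univ, Fintype.card_fin]
    have : (1:ℕ) ≤ n := hn
    push_cast [Nat.cast_sub this]
    ring
  have hsum : ∑ i ∈ univ.erase i0, ((ν i)⁻¹).re
      ≤ ((n : ℝ) - 1) * (1 / (1 - lamstar)) := by
    calc ∑ i ∈ univ.erase i0, ((ν i)⁻¹).re
        ≤ ∑ _i ∈ univ.erase i0, 1 / (1 - lamstar) := Finset.sum_le_sum hbound
      _ = ((univ.erase i0).card : ℝ) * (1 / (1 - lamstar)) := by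
          rw [Finset.sum_const, nsmul_eq_mul]
      _ = ((n : ℝ) - 1) * (1 / (1 - lamstar)) := by rw [hcard]
  rw [hsplit]
  have : ((n : ℝ) - 1) * (1 / (1 - lamstar)) = ((n : ℝ) - 1) / (1 - lamstar) := by
    ring
  linarith [hsum]
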